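/- Let V be a finite set of points in ℤ² with |V| = n ≥ 3. If V has a Hamiltonian cycle in the grid graph (edges between points at Euclidean distance exactly 1), then the shortest closed tour visiting all points of V has Euclidean length exactly n. If V has no such Hamiltonian cycle, then every closed tour visiting all points of V has Euclidean length at least n + √2 − 1. -/

import Mathlib

/-- Euclidean distance between two lattice points. -/
noncomputable def latticeDist (a b : ℤ × ℤ) : ℝ :=
  Real.sqrt (((a.1 - b.1 : ℤ) : ℝ) ^ 2 + ((a.2 - b.2 : ℤ) : ℝ) ^ 2)

/-- The Euclidean length of the closed tour `t 0, t 1, …, t m, t 0`. -/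
noncomputable def tourLength {m : ℕ} (t : Fin (m + 1) → ℤ × ℤ) : ℝ :=
  ∑ i : Fin (m + 1), latticeDist (t i) (t (i + 1))

/-- The tour visits every point of `V` (at least once). -/
def VisitsAll {m : ℕ} (t : Fin (m + 1) → ℤ × ℤ) (V : Finset (ℤ × ℤ)) : Prop :=
  ∀ v ∈ V, ∃ i, t i = v

noncomputable def toC (a : ℤ × ℤ) : ℂ := ⟨a.1, a.2⟩

lemma latticeDist_eq (a b : ℤ × ℤ) : latticeDist a b = dist (toC a) (toC b) := by
  rw [Complex.dist_eq, Complex.norm_def, Complex.normSq_apply, latticeDist]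
  simp only [toC, Complex.sub_re, Complex.sub_im]
  push_cast
  ring_nf

lemma sum_Ico_of_periodic (g : ℕ → ℝ) (p : ℕ) (hg : ∀ i, g (i + p) = g i) :
    ∀ a, ∑ i ∈ Finset.Ico a (a + p), g i = ∑ i ∈ Finset.range p, g i := by
  intro a
  induction a with
  | zero => simp
  | succ a ih =>
    rcases Nat.eq_zero_or_pos p with hp | hp
    · simp [hp]
    · have h1 : a + 1 + p = (a + p) + 1 := by omega
      rw [h1, Finset.sum_Ico_succ_top (by omega), ← ih,
        Finset.sum_eq_sum_Ico_succ_bot (by omega : a < a + p)]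
      rw [hg a]; ring

lemma b_mono_le {b : ℕ → ℕ} {k : ℕ} (hm : ∀ j < k, b j < b (j + 1)) :
    ∀ j ≤ k, b 0 ≤ b j := by
  intro j
  induction j with
  | zero => intro _; exact le_rfl
  | succ j ih =>
    intro hj
    exact le_trans (ih (by omega)) (le_of_lt (hm j (by omega)))

lemma shortcut (g : ℕ → ℂ) (b : ℕ → ℕ) :
    ∀ k, (∀ j < k, b j < b (j + 1)) →
      ∑ j ∈ Finset.range k, dist (g (b j)) (g (b (j + 1))) ≤
        ∑ i ∈ Finset.Ico (b 0) (b k), dist (g i) (g (i + 1)) := by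
  intro k
  induction k with
  | zero => simp
  | succ k ih =>
    intro hm
    have h0k : b 0 ≤ b k := b_mono_le hm k (by omega)
    have hkk : b k ≤ b (k + 1) := le_of_lt (hm k (by omega))
    rw [Finset.sum_range_succ, ← Finset.sum_Ico_consecutive _ h0k hkk]
    have h1 := ih (fun j hj => hm j (by omega))
    have h2 := dist_le_Ico_sum_dist g hkk
    linarith

lemma fin_add_one_val {n : ℕ} [NeZero n] (j : Fin n) :
    ((j + 1 : Fin n) : ℕ) = (j.val + 1) % n := by
  rw [Fin.add_def]
  exact Nat.ModEq.add_left j.val (Nat.mod_modEq 1 n)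

open Fin.NatCast in
lemma key (V : Finset (ℤ × ℤ)) (n : ℕ) [NeZero n] (hcard : V.card = n)
    (m : ℕ) (t : Fin (m + 1) → ℤ × ℤ) (ht : VisitsAll t V) :
    ∃ w : Fin n → ℤ × ℤ, (∀ j, w j ∈ V) ∧ Function.Injective w ∧
      ∑ j : Fin n, latticeDist (w j) (w (j + 1)) ≤ tourLength t := by
  classical
  have hn : 1 ≤ n := Nat.one_le_iff_ne_zero.mpr (NeZero.ne n)
  set f : ℤ × ℤ → ℕ := fun v => if h : v ∈ V then ((ht v h).choose : Fin (m+1)).val else 0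
    with hf
  have hft : ∀ v ∈ V, t ((f v : ℕ) : Fin (m + 1)) = v := by
    intro v hv
    simp only [hf, dif_pos hv, Fin.cast_val_eq_self]
    exact (ht v hv).choose_spec
  set T : ℕ → ℤ × ℤ := fun i => t ((i : ℕ) : Fin (m + 1)) with hT
  have hTf : ∀ v ∈ V, T (f v) = v := hft
  set I : Finset ℕ := V.image f with hI
  have hInj : Set.InjOn f V := by
    intro v hv v' hv' he
    rw [← hTf v hv, ← hTf v' hv', he]
  have hIcard : I.card = n := by
    rw [hI, Finset.card_image_of_injOn hInj, hcard]
  have hImem : ∀ i ∈ I, T i ∈ V ∧ f (T i) = i := by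
    intro i hi
    obtain ⟨v, hv, rfl⟩ := Finset.mem_image.mp hi
    rw [hTf v hv]; exact ⟨hv, rfl⟩
  have hIlt : ∀ i ∈ I, i < m + 1 := by
    intro i hi
    obtain ⟨v, hv, rfl⟩ := Finset.mem_image.mp hi
    simp only [hf, dif_pos hv]
    exact Fin.is_lt _
  set e := I.orderIsoOfFin hIcard with he
  set a : Fin n → ℕ := fun j => (e j : ℕ) with ha
  have haI : ∀ j, a j ∈ I := fun j => (e j).2
  have haMono : StrictMono a := fun i j hij => by
    exact_mod_cast e.strictMono hij
  set w : Fin n → ℤ × ℤ := fun j => T (a j) with hw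
  have hwV : ∀ j, w j ∈ V := fun j => (hImem _ (haI j)).1
  have hwInj : Function.Injective w := by
    intro i j hij
    apply haMono.injective
    calc a i = f (T (a i)) := ((hImem _ (haI i)).2).symm
      _ = f (T (a j)) := congrArg f hij
      _ = a j := (hImem _ (haI j)).2
  refine ⟨w, hwV, hwInj, ?_⟩
  set b : ℕ → ℕ := fun j => if h : j < n then a ⟨j, h⟩ else a ⟨0, by omega⟩ + (m + 1)
    with hb
  have hbm : ∀ j < n, b j < b (j + 1) := by
    intro j hj
    by_cases h1 : j + 1 < n
    · rw [hb]; simp only [dif_pos hj, dif_pos h1]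
      exact haMono (by simp [Fin.lt_def])
    · rw [hb]; simp only [dif_pos hj, dif_neg h1]
      calc a ⟨j, hj⟩ < m + 1 := hIlt _ (haI _)
        _ ≤ a ⟨0, by omega⟩ + (m + 1) := by omega
  have hTper : ∀ i, T (i + (m + 1)) = T i := by
    intro i
    simp only [hT]
    rw [show (((i + (m+1)) : ℕ) : Fin (m+1)) = ((i:ℕ) : Fin (m+1)) from by
      rw [Nat.cast_add, Fin.natCast_self, add_zero]]
  set g : ℕ → ℂ := fun i => toC (T i) with hg
  have hgd : ∀ i j, dist (g i) (g j) = latticeDist (T i) (T j) := by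
    intro i j; rw [latticeDist_eq]
  set G : ℕ → ℝ := fun i => dist (g i) (g (i + 1)) with hG
  have hGper : ∀ i, G (i + (m + 1)) = G i := by
    intro i
    simp only [hG, hg]
    rw [show i + (m+1) + 1 = (i+1) + (m+1) by omega, hTper, hTper]
  have htour : tourLength t = ∑ i ∈ Finset.range (m + 1), G i := by
    rw [tourLength, ← Fin.sum_univ_eq_sum_range G (m+1)]
    apply Finset.sum_congr rfl
    intro i _
    simp only [hG, hgd, hT]
    have e1 : ((i.val : ℕ) : Fin (m+1)) = i := Fin.cast_val_eq_self i
    have e2 : (((i.val + 1 : ℕ)) : Fin (m+1)) = i + 1 := by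
      rw [Nat.cast_add, Nat.cast_one, Fin.cast_val_eq_self]
    rw [e1, e2]
  have hsc := shortcut g b n hbm
  have hbn : b n = b 0 + (m + 1) := by
    rw [hb]; simp only [dif_neg (lt_irrefl n), dif_pos (by omega : 0 < n)]
  have hwin : ∑ i ∈ Finset.Ico (b 0) (b n), G i = ∑ i ∈ Finset.range (m + 1), G i := by
    rw [hbn]; exact sum_Ico_of_periodic G (m + 1) hGper (b 0)
  have hlhs : ∑ j : Fin n, latticeDist (w j) (w (j + 1)) =
      ∑ j ∈ Finset.range n, dist (g (b j)) (g (b (j + 1))) := by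
    rw [← Fin.sum_univ_eq_sum_range (fun j => dist (g (b j)) (g (b (j + 1)))) n]
    apply Finset.sum_congr rfl
    intro j _
    rw [hgd]
    have h1 : T (b j.val) = w j := by
      rw [hb]; simp only [dif_pos j.isLt]; rfl
    have h2 : T (b (j.val + 1)) = w (j + 1) := by
      by_cases h3 : j.val + 1 < n
      · rw [hb]; simp only [dif_pos h3]
        rw [hw]
        congr 1
        congr 1
        ext
        rw [fin_add_one_val, Nat.mod_eq_of_lt h3]
      · have hj1 : j.val + 1 = n := by omega
        rw [hb]; simp only [dif_neg (by omega : ¬ j.val + 1 < n)]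
        rw [hTper, hw]
        congr 1
        congr 1
        ext
        rw [fin_add_one_val, hj1, Nat.mod_self]
    rw [h1, h2]
  rw [hlhs, htour, ← hwin]
  exact hsc


lemma latticeDist_sq (a b : ℤ × ℤ) :
    latticeDist a b = Real.sqrt ((((a.1 - b.1) ^ 2 + (a.2 - b.2) ^ 2 : ℤ) : ℝ)) := by
  rw [latticeDist]; push_cast; ring_nf

lemma sq_pos_of_ne (a b : ℤ × ℤ) (h : a ≠ b) :
    1 ≤ (a.1 - b.1) ^ 2 + (a.2 - b.2) ^ 2 := by
  rcases eq_or_ne a.1 b.1 with h1 | h1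
  · have h2 : a.2 ≠ b.2 := by
      intro h2; exact h (Prod.ext h1 h2)
    have : 1 ≤ (a.2 - b.2) ^ 2 := by
      have : a.2 - b.2 ≠ 0 := sub_ne_zero.mpr h2
      nlinarith [Int.one_le_abs this, sq_abs (a.2 - b.2)]
    nlinarith [sq_nonneg (a.1 - b.1)]
  · have : 1 ≤ (a.1 - b.1) ^ 2 := by
      have : a.1 - b.1 ≠ 0 := sub_ne_zero.mpr h1
      nlinarith [Int.one_le_abs this, sq_abs (a.1 - b.1)]
    nlinarith [sq_nonneg (a.2 - b.2)]

lemma one_le_latticeDist {a b : ℤ × ℤ} (h : a ≠ b) : 1 ≤ latticeDist a b := by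
  rw [latticeDist_sq]
  have := sq_pos_of_ne a b h
  have h1 : (1 : ℝ) ≤ (((a.1 - b.1) ^ 2 + (a.2 - b.2) ^ 2 : ℤ) : ℝ) := by exact_mod_cast this
  calc (1:ℝ) = Real.sqrt 1 := (Real.sqrt_one).symm
    _ ≤ _ := Real.sqrt_le_sqrt h1

lemma sqrt_two_le_latticeDist {a b : ℤ × ℤ} (h : a ≠ b) (h1 : latticeDist a b ≠ 1) :
    Real.sqrt 2 ≤ latticeDist a b := by
  have hq := sq_pos_of_ne a b h
  have h2 : 2 ≤ (a.1 - b.1) ^ 2 + (a.2 - b.2) ^ 2 := by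
    rcases eq_or_lt_of_le hq with he | hl
    · exfalso; apply h1
      rw [latticeDist_sq, ← he]
      norm_num
    · omega
  rw [latticeDist_sq]
  apply Real.sqrt_le_sqrt
  exact_mod_cast h2

lemma finRotate_eq_add_one {k : ℕ} [NeZero k] (j : Fin k) : finRotate k j = j + 1 := by
  cases k with
  | zero => exact absurd rfl (NeZero.ne 0)
  | succ k => exact finRotate_succ_apply j

lemma fin_cast_add_one {p q : ℕ} (h : p = q) [NeZero p] [NeZero q] (i : Fin p) :
    Fin.cast h (i + 1) = Fin.cast h i + 1 := by
  subst h
  rfl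

lemma fin_add_one_ne {n : ℕ} [NeZero n] (hn : 2 ≤ n) (j : Fin n) : j + 1 ≠ j := by
  intro h
  have hv := congrArg Fin.val h
  rw [fin_add_one_val] at hv
  have hlt := j.isLt
  rcases Nat.lt_or_ge (j.val + 1) n with h3 | h3
  · rw [Nat.mod_eq_of_lt h3] at hv; omega
  · have hj1 : j.val + 1 = n := by omega
    rw [hj1, Nat.mod_self] at hv
    omega

/-- `V` has a Hamiltonian cycle in the grid graph, whose edges join points of `V`
at Euclidean distance exactly 1. -/
def HasGridHamCycle (V : Finset (ℤ × ℤ)) : Prop :=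
  ∃ c : Fin V.card → ℤ × ℤ, (∀ i, c i ∈ V) ∧ Function.Injective c ∧
    ∀ i, latticeDist (c i) (c (finRotate _ i)) = 1

theorem grid_tsp_gap (V : Finset (ℤ × ℤ)) (n : ℕ) (hcard : V.card = n) (hn : 3 ≤ n) :
    (HasGridHamCycle V →
      (∃ (m : ℕ) (t : Fin (m + 1) → ℤ × ℤ), VisitsAll t V ∧ tourLength t = n) ∧
      (∀ (m : ℕ) (t : Fin (m + 1) → ℤ × ℤ), VisitsAll t V → (n : ℝ) ≤ tourLength t)) ∧
    (¬ HasGridHamCycle V →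
      ∀ (m : ℕ) (t : Fin (m + 1) → ℤ × ℤ), VisitsAll t V →
        (n : ℝ) + Real.sqrt 2 - 1 ≤ tourLength t) := by
  classical
  haveI : NeZero n := ⟨by omega⟩
  have lower : ∀ (m : ℕ) (t : Fin (m + 1) → ℤ × ℤ), VisitsAll t V → (n : ℝ) ≤ tourLength t := by
    intro m t htv
    obtain ⟨w, hwV, hwInj, hle⟩ := key V n hcard m t htv
    have h1 : ∀ j : Fin n, (1 : ℝ) ≤ latticeDist (w j) (w (j + 1)) := by
      intro j
      apply one_le_latticeDist
      intro heq
      exact fin_add_one_ne (by omega) j ((hwInj heq).symm)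
    calc (n : ℝ) = ∑ _j : Fin n, (1 : ℝ) := by simp
      _ ≤ ∑ j : Fin n, latticeDist (w j) (w (j + 1)) := Finset.sum_le_sum (fun j _ => h1 j)
      _ ≤ tourLength t := hle
  constructor
  · rintro ⟨c, hcV, hcInj, hcE⟩
    refine ⟨?_, lower⟩
    obtain ⟨m, hm⟩ : ∃ m, n = m + 1 := ⟨n - 1, by omega⟩
    have hcast : m + 1 = V.card := by omega
    have hsurj : ∀ v ∈ V, ∃ i, c i = v := by
      intro v hv
      set c' : Fin V.card → {x // x ∈ V} := fun i => ⟨c i, hcV i⟩ with hc'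
      have hinj' : Function.Injective c' := by
        intro i j h
        apply hcInj
        exact congrArg Subtype.val h
      have hbij : Function.Bijective c' := by
        rw [Fintype.bijective_iff_injective_and_card]
        exact ⟨hinj', by simp⟩
      obtain ⟨i, hi⟩ := hbij.2 ⟨v, hv⟩
      exact ⟨i, congrArg Subtype.val hi⟩
    refine ⟨m, fun i => c (Fin.cast hcast i), ?_, ?_⟩
    · intro v hv
      obtain ⟨i, hi⟩ := hsurj v hv
      refine ⟨Fin.cast hcast.symm i, ?_⟩
      simpa using hi
    · rw [tourLength]
      have hterm : ∀ i : Fin (m + 1),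
          latticeDist (c (Fin.cast hcast i)) (c (Fin.cast hcast (i + 1))) = 1 := by
        intro i
        haveI : NeZero V.card := ⟨by omega⟩
        rw [fin_cast_add_one, ← finRotate_eq_add_one]
        exact hcE _
      rw [Finset.sum_congr rfl (fun i _ => hterm i)]
      simp [hm]
  · intro hnot m t htv
    obtain ⟨w, hwV, hwInj, hle⟩ := key V n hcard m t htv
    have hedge : ∃ j0 : Fin n, latticeDist (w j0) (w (j0 + 1)) ≠ 1 := by
      by_contra hall
      push_neg at hall
      apply hnot
      haveI : NeZero V.card := ⟨by omega⟩
      refine ⟨fun i => w (Fin.cast hcard i), fun i => hwV _, ?_, ?_⟩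
      · intro i j h
        exact Fin.ext (by simpa using congrArg Fin.val (hwInj h))
      · intro i
        simp only []
        rw [finRotate_eq_add_one, fin_cast_add_one]
        exact hall _
    obtain ⟨j0, hj0⟩ := hedge
    have hne0 : w j0 ≠ w (j0 + 1) := by
      intro heq
      exact fin_add_one_ne (by omega) j0 ((hwInj heq).symm)
    have h2 : Real.sqrt 2 ≤ latticeDist (w j0) (w (j0 + 1)) :=
      sqrt_two_le_latticeDist hne0 hj0
    have h1 : ∀ j ∈ Finset.univ.erase j0, (1 : ℝ) ≤ latticeDist (w j) (w (j + 1)) := by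
      intro j _
      apply one_le_latticeDist
      intro heq
      exact fin_add_one_ne (by omega) j ((hwInj heq).symm)
    have hcardE : (Finset.univ.erase j0).card = n - 1 := by
      rw [Finset.card_erase_of_mem (Finset.mem_univ j0), Finset.card_univ, Fintype.card_fin]
    have hsum1 : ((n - 1 : ℕ) : ℝ) ≤
        ∑ j ∈ Finset.univ.erase j0, latticeDist (w j) (w (j + 1)) := by
      calc ((n - 1 : ℕ) : ℝ) = ∑ _j ∈ Finset.univ.erase j0, (1 : ℝ) := by
            rw [Finset.sum_const, hcardE]; simp
        _ ≤ _ := Finset.sum_le_sum h1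
    have hsplit := Finset.sum_erase_add Finset.univ
      (fun j => latticeDist (w j) (w (j + 1))) (Finset.mem_univ j0)
    have hcastR : ((n - 1 : ℕ) : ℝ) = (n : ℝ) - 1 := by
      have : (1 : ℕ) ≤ n := by omega
      push_cast [this]
      ring
    rw [hcastR] at hsum1
    have : (n : ℝ) - 1 + Real.sqrt 2 ≤ ∑ j : Fin n, latticeDist (w j) (w (j + 1)) := by
      rw [← hsplit]
      exact add_le_add hsum1 h2
    linarith
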